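/- Let s be a word of length 2 that is a suffix of f(a) for some letter a ∈ A₄, and let b ∈ A₄. If the word s·b (of length 3) occurs in w at positions i ≥ 1 and j ≥ 1, then the preceding letters agree: w(i−1) = w(j−1). In other words, the letter preceding any occurrence of s·b in w is uniquely determined. -/

import Mathlib

/-- The four-letter alphabet `A₄ = {1,2,3,4}`; the value `k : Fin 4` represents letter `k+1`. -/
abbrev A4 := Fin 4

/-- The morphism `f` on letters: `f(1)=121, f(2)=123, f(3)=141, f(4)=142`
(letters `1,2,3,4` encoded as `0,1,2,3`). -/
def fm : A4 → List A4
  | 0 => [0, 1, 0]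
  | 1 => [0, 1, 2]
  | 2 => [0, 3, 0]
  | 3 => [0, 3, 1]

/-- The morphism `f` extended to words by concatenation. -/
def fw (u : List A4) : List A4 := u.flatMap fm

/-- The fixed point `w` of `f` starting with the letter `1`: since `|f^k(1)| = 3^k` and each
`f^k(1)` is a prefix of `f^(k+1)(1)`, the `n`-th letter of `w` is the `n`-th letter of
`f^(n+1)(1)`. -/
def w (n : ℕ) : A4 := ((fw^[n + 1]) [0]).getD n 0

/-- The finite word `t` occurs at position `i` in the infinite word `x`. -/
def OccursAt {α : Type*} (t : List α) (x : ℕ → α) (i : ℕ) : Prop :=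
  t = (List.range t.length).map fun k => x (i + k)

/-- The finite word `v` is a factor of the infinite word `x`. -/
def FactorOf {α : Type*} (v : List α) (x : ℕ → α) : Prop :=
  ∃ i, OccursAt v x i

/-- The finite word `v` has period `q ≥ 1`: `v(j) = v(j+q)` whenever `0 ≤ j < |v| - q`. -/
def HasPeriod {α : Type*} (v : List α) (q : ℕ) : Prop :=
  1 ≤ q ∧ ∀ j, j + q < v.length → v[j]? = v[j + q]?

/-- A word lies in `ker ψ` if each letter of `A₄` occurs in it a number of times
divisible by `4`. -/
def InKerPsi (u : List A4) : Prop := ∀ a : A4, 4 ∣ u.count a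

/-- `q` is a kernel period of `v`: `1 ≤ q ≤ |v|`, `v` has period `q`, and the prefix of `v`
of length `q` lies in `ker ψ`. -/
def KernelPeriod (v : List A4) (q : ℕ) : Prop :=
  q ≤ v.length ∧ HasPeriod v q ∧ InKerPsi (v.take q)

lemma fm_len (c : A4) : (fm c).length = 3 := by fin_cases c <;> rfl

lemma fw_cons (a : A4) (t : List A4) : fw (a :: t) = fm a ++ fw t := by
  simp [fw]

lemma fw_append (u v : List A4) : fw (u ++ v) = fw u ++ fw v := by
  simp [fw]

lemma fw_len (u : List A4) : (fw u).length = 3 * u.length := by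
  induction u with
  | nil => rfl
  | cons a t ih => simp [fw_cons, ih, fm_len]; ring

lemma fw_getD (u : List A4) (n r : ℕ) (hn : n < u.length) (hr : r < 3) :
    (fw u).getD (3*n+r) 0 = (fm (u.getD n 0)).getD r 0 := by
  induction u generalizing n with
  | nil => simp at hn
  | cons a t ih =>
    rw [fw_cons]
    cases n with
    | zero =>
      simp only [Nat.mul_zero, Nat.zero_add]
      rw [List.getD_append _ _ _ _ (by rw [fm_len]; exact hr)]
      rfl
    | succ m =>
      have h3 : 3*(m+1)+r = (fm a).length + (3*m+r) := by rw [fm_len]; ring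
      rw [h3, List.getD_append_right _ _ _ _ (Nat.le_add_right _ _), Nat.add_sub_cancel_left]
      exact ih m (by simpa using hn)

lemma fw_prefix {u v : List A4} (h : u <+: v) : fw u <+: fw v := by
  obtain ⟨t, rfl⟩ := h
  rw [fw_append]
  exact List.prefix_append _ _

lemma W_len (m : ℕ) : ((fw^[m]) [0] : List A4).length = 3^m := by
  induction m with
  | zero => rfl
  | succ k ih => rw [Function.iterate_succ_apply', fw_len, ih, pow_succ, Nat.mul_comm]

lemma W_prefix_succ (m : ℕ) : (fw^[m]) [0] <+: (fw^[m+1]) [0] := by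
  induction m with
  | zero => exact ⟨[1,0], rfl⟩
  | succ k ih =>
    rw [Function.iterate_succ_apply', Function.iterate_succ_apply' fw (k+1)]
    exact fw_prefix ih

lemma W_prefix {m m' : ℕ} (h : m ≤ m') : (fw^[m]) [0] <+: (fw^[m']) [0] := by
  induction m' with
  | zero => rw [Nat.le_zero.mp h]
  | succ k ih =>
    rcases Nat.lt_or_ge m (k+1) with h' | h'
    · exact (ih (Nat.lt_succ_iff.mp h')).trans (W_prefix_succ k)
    · rw [Nat.le_antisymm h h']

lemma w_eq (n m : ℕ) (h : n < 3^m) : w n = ((fw^[m]) [0]).getD n 0 := by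
  unfold w
  rcases Nat.le_total m (n+1) with hm | hm
  · obtain ⟨t, ht⟩ := W_prefix hm
    rw [← ht, List.getD_append _ _ _ _ (by rw [W_len]; exact h)]
  · obtain ⟨t, ht⟩ := W_prefix hm
    rw [← ht, List.getD_append _ _ _ _ ?_]
    rw [W_len]
    calc n < n + 1 := Nat.lt_succ_self n
    _ < 3 ^ (n+1) := (Nat.lt_pow_self (by norm_num) : n+1 < 3^(n+1))

lemma w_block (k r : ℕ) (hr : r < 3) : w (3*k+r) = (fm (w k)).getD r 0 := by
  have hk : k < 3^(k+1) :=
    lt_trans (Nat.lt_succ_self k) (Nat.lt_pow_self (by norm_num) : k+1 < 3^(k+1))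
  have h2 : 3*k+r < 3^(k+2) := by
    calc 3*k+r < 3*(k+1) := by omega
    _ ≤ 3*3^(k+1) := Nat.mul_le_mul_left 3 hk
    _ = 3^(k+2) := by ring
  rw [w_eq _ (k+2) h2, w_eq k (k+1) hk,
    show (k+2) = (k+1)+1 from rfl, Function.iterate_succ_apply']
  exact fw_getD _ k r (by rw [W_len]; exact hk) hr

lemma fm_getD0 : ∀ c : A4, (fm c).getD 0 0 = 0 := by decide

lemma fm_getD1 : ∀ c : A4, (fm c).getD 1 0 = 1 ∨ (fm c).getD 1 0 = 3 := by decide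

lemma w_mul3 (k : ℕ) : w (3*k) = 0 := by
  have h := w_block k 0 (by norm_num)
  rw [Nat.add_zero] at h
  rw [h, fm_getD0]

def prec (s : List A4) (b : A4) : A4 := if s = [1,0] ∧ (b = 1 ∨ b = 3) then 3 else 0

lemma occ3 {s0 s1 b : A4} {i : ℕ} (h : OccursAt ([s0,s1] ++ [b]) w i) :
    w i = s0 ∧ w (i+1) = s1 ∧ w (i+2) = b := by
  have h' : ([s0,s1,b] : List A4) = [w (i+0), w (i+1), w (i+2)] := h
  simp only [Nat.add_zero, List.cons.injEq, and_true] at h'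
  exact ⟨h'.1.symm, h'.2.1.symm, h'.2.2.symm⟩

lemma key (s : List A4) (hs : s = [1,0] ∨ s = [1,2] ∨ s = [3,0] ∨ s = [3,1]) (b : A4)
    (i : ℕ) (hoi : OccursAt (s ++ [b]) w i) : w (i-1) = prec s b := by
  obtain ⟨k, r, hr3, rfl⟩ : ∃ k r, r < 3 ∧ i = 3*k + r :=
    ⟨i/3, i%3, Nat.mod_lt _ (by norm_num), (Nat.div_add_mod i 3).symm⟩
  have hfm2 : ∀ c : A4, (fm c).getD 2 0 ≠ 3 := by decide
  have hfm21 : ∀ c : A4, (fm c).getD 2 0 = 1 → c = 3 := by decide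
  rcases hs with rfl | rfl | rfl | rfl <;>
    obtain ⟨h0, h1, h2⟩ := occ3 hoi <;> interval_cases r
  -- s = [1,0]
  · rw [Nat.add_zero, w_mul3] at h0; exact absurd h0 (by decide)
  · rw [show 3*k+1+2 = 3*(k+1) by ring, w_mul3] at h2
    subst h2
    show w (3*k) = prec [1,0] 0
    rw [w_mul3]; decide
  · rw [show 3*k+2 = 3*k+2 from rfl, w_block k 2 (by norm_num)] at h0
    have hwk : w k = 3 := hfm21 _ h0
    rw [show 3*k+2+2 = 3*(k+1)+1 by ring, w_block (k+1) 1 (by norm_num)] at h2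
    have hb : b = 1 ∨ b = 3 := h2 ▸ fm_getD1 (w (k+1))
    show w (3*k+1) = prec [1,0] b
    rw [w_block k 1 (by norm_num), hwk]
    unfold prec
    rw [if_pos ⟨rfl, hb⟩]
    rfl
  -- s = [1,2]
  · rw [Nat.add_zero, w_mul3] at h0; exact absurd h0 (by decide)
  · show w (3*k) = prec [1,2] b
    rw [w_mul3]
    unfold prec
    rw [if_neg (by simp)]
  · rw [show 3*k+2+1 = 3*(k+1) by ring, w_mul3] at h1
    exact absurd h1 (by decide)
  -- s = [3,0]
  · rw [Nat.add_zero, w_mul3] at h0; exact absurd h0 (by decide)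
  · show w (3*k) = prec [3,0] b
    rw [w_mul3]
    unfold prec
    rw [if_neg (by simp)]
  · rw [w_block k 2 (by norm_num)] at h0
    exact absurd h0 (hfm2 _)
  -- s = [3,1]
  · rw [Nat.add_zero, w_mul3] at h0; exact absurd h0 (by decide)
  · show w (3*k) = prec [3,1] b
    rw [w_mul3]
    unfold prec
    rw [if_neg (by simp)]
  · rw [w_block k 2 (by norm_num)] at h0
    exact absurd h0 (hfm2 _)

/-- If `s` is a length-2 suffix of the image of a letter and the length-3 word `s·b` occurs in
`w` at positions `i ≥ 1` and `j ≥ 1`, then the preceding letters agree: `w(i-1) = w(j-1)`. -/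
theorem stmt10 (s : List A4) (hs : s.length = 2) (a : A4) (hsuf : s <:+ fm a) (b : A4)
    (i j : ℕ) (hi : 1 ≤ i) (hj : 1 ≤ j)
    (hoi : OccursAt (s ++ [b]) w i) (hoj : OccursAt (s ++ [b]) w j) :
    w (i - 1) = w (j - 1) := by
  have hcase : s = [1,0] ∨ s = [1,2] ∨ s = [3,0] ∨ s = [3,1] := by
    obtain ⟨x, y, rfl⟩ : ∃ x y, s = [x,y] := by
      match s, hs with | [x,y], _ => exact ⟨x, y, rfl⟩
    obtain ⟨t, ht⟩ := hsuf
    have hl : t.length = 1 := by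
      have := congrArg List.length ht
      simp [fm_len] at this
      omega
    obtain ⟨c, rfl⟩ := List.length_eq_one_iff.mp hl
    fin_cases a <;> simp [fm] at ht <;> simp [ht]
  rw [key s hcase b i hoi, key s hcase b j hoj]
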